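/- arXiv:2510.02405 — 8 statements merged into one kernel-verified Lean document; each statement's English description precedes it below -/
import Mathlib

section
/- Let n, m be positive integers with m ≤ n and let O, S ∈ ℝ^{n×m} be matrices all of whose columns are nonzero. Then S_c(O) = S_c(S) if and only if there exist an orthogonal matrix Q ∈ ℝ^{n×n} and a diagonal matrix N ∈ ℝ^{m×m} with strictly positive diagonal entries such that Q O N = S. -/
open Matrix



open Matrix

/-- Euclidean dot product on `ℝ^n`. -/
noncomputable def dotv {n : ℕ} (u v : Fin n → ℝ) : ℝ := ∑ i, u i * v i

/-- Euclidean norm on `ℝ^n`. -/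
noncomputable def enormv {n : ℕ} (u : Fin n → ℝ) : ℝ := Real.sqrt (dotv u u)

/-- Arithmetic mean of a vector. -/
noncomputable def meanv {n : ℕ} (f : Fin n → ℝ) : ℝ := (∑ i, f i) / n

/-- Mean-centered vector `f̄ = f - Mean(f)·𝟙`. -/
noncomputable def centv {n : ℕ} (f : Fin n → ℝ) : Fin n → ℝ := fun i => f i - meanv f

/-- Variance of a vector: `Var(f) = (1/n)‖f̄‖²`. -/
noncomputable def varv {n : ℕ} (f : Fin n → ℝ) : ℝ := (∑ i, (centv f i) ^ 2) / n

/-- The `j`-th column of a matrix. -/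
noncomputable def col {n m : ℕ} (A : Matrix (Fin n) (Fin m) ℝ) (j : Fin m) : Fin n → ℝ :=
  fun i => A i j

/-- Cosine similarity matrix: `S_c(A)_{jk} = (A_j·A_k)/(‖A_j‖‖A_k‖)`. -/
noncomputable def cosSim {n m : ℕ} (A : Matrix (Fin n) (Fin m) ℝ) : Matrix (Fin m) (Fin m) ℝ :=
  fun j k => dotv (_root_.col A j) (_root_.col A k) / (enormv (_root_.col A j) * enormv (_root_.col A k))

/-- Column-wise mean centering of a matrix: `Ā_j = A_j − Mean(A_j)·𝟙`. -/
noncomputable def centM {n m : ℕ} (A : Matrix (Fin n) (Fin m) ℝ) : Matrix (Fin n) (Fin m) ℝ :=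
  fun i j => A i j - meanv (_root_.col A j)

/-- Pearson correlation matrix: cosine similarity of the centered columns. -/
noncomputable def corrM {n m : ℕ} (A : Matrix (Fin n) (Fin m) ℝ) : Matrix (Fin m) (Fin m) ℝ :=
  cosSim (centM A)

/-- Frobenius norm of a matrix. -/
noncomputable def frob {n m : ℕ} (A : Matrix (Fin n) (Fin m) ℝ) : ℝ :=
  Real.sqrt (∑ i, ∑ j, (A i j) ^ 2)

/-- Given the diagonal entries `σ` of a diagonal matrix `Σ` with nonnegative entries,
`Isig σ` is the diagonal matrix `I_Σ` with `(I_Σ)_{ii} = 1` if `Σ_{ii} > 0` and `0` otherwise. -/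
noncomputable def Isig {n : ℕ} (σ : Fin n → ℝ) : Matrix (Fin n) (Fin n) ℝ :=
  Matrix.diagonal (fun i => if 0 < σ i then (1 : ℝ) else 0)


lemma dotP_self (M : Matrix (Fin n) (Fin m) ℝ) (c : Fin m → ℝ) :
    c ⬝ᵥ ((Mᵀ*M) *ᵥ c) = (M *ᵥ c) ⬝ᵥ (M *ᵥ c) := by
  rw [← mulVec_mulVec, dotProduct_mulVec, vecMul_transpose]

lemma exists_orthogonal {n m : ℕ} (A S : Matrix (Fin n) (Fin m) ℝ) (h : Aᵀ*A = Sᵀ*S) :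
    ∃ Q : Matrix (Fin n) (Fin n) ℝ, Qᵀ*Q = 1 ∧ Q*A = S := by
  classical
  have hdot : ∀ c : Fin m → ℝ, (A *ᵥ c) ⬝ᵥ (A *ᵥ c) = (S *ᵥ c) ⬝ᵥ (S *ᵥ c) := by
    intro c
    rw [← dotP_self, ← dotP_self, h]
  set f : EuclideanSpace ℝ (Fin m) →ₗ[ℝ] EuclideanSpace ℝ (Fin n) := Matrix.toEuclideanLin A with hf
  set g : EuclideanSpace ℝ (Fin m) →ₗ[ℝ] EuclideanSpace ℝ (Fin n) := Matrix.toEuclideanLin S with hg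
  have hnorm : ∀ c : EuclideanSpace ℝ (Fin m), ‖f c‖ = ‖g c‖ := by
    intro c
    have hA := Matrix.toEuclideanLin_apply A c
    have hS := Matrix.toEuclideanLin_apply S c
    rw [hf, hg, hA, hS]
    rw [EuclideanSpace.norm_eq, EuclideanSpace.norm_eq]
    congr 1
    simp only [PiLp.toLp_apply, Real.norm_eq_abs, sq_abs]
    have := hdot ((WithLp.equiv 2 (Fin m → ℝ)) c)
    simpa [dotProduct, ← sq] using this
  have hker : LinearMap.ker f ≤ LinearMap.ker g := by
    intro c hc
    rw [LinearMap.mem_ker] at hc ⊢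
    have : ‖g c‖ = 0 := by rw [← hnorm, hc, norm_zero]
    exact norm_eq_zero.mp this
  set φ : LinearMap.range f →ₗ[ℝ] EuclideanSpace ℝ (Fin n) :=
    ((LinearMap.ker f).liftQ g hker).comp f.quotKerEquivRange.symm.toLinearMap with hφdef
  have hφ : ∀ c, φ ⟨f c, LinearMap.mem_range_self f c⟩ = g c := by
    intro c
    have h1 : f.quotKerEquivRange.symm ⟨f c, LinearMap.mem_range_self f c⟩
        = (LinearMap.ker f).mkQ c := f.quotKerEquivRange_symm_apply_image c _
    simp only [hφdef, LinearMap.comp_apply, LinearEquiv.coe_coe, h1, Submodule.mkQ_apply,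
      Submodule.liftQ_apply]
  have hφn : ∀ v : LinearMap.range f, ‖φ v‖ = ‖v‖ := by
    rintro ⟨v, c, rfl⟩
    rw [hφ c]
    exact (hnorm c).symm
  let L : LinearMap.range f →ₗᵢ[ℝ] EuclideanSpace ℝ (Fin n) := ⟨φ, hφn⟩
  let Lx := L.extend
  set Q : Matrix (Fin n) (Fin n) ℝ := Matrix.toEuclideanLin.symm Lx.toLinearMap with hQ
  have hQL : Matrix.toEuclideanLin Q = Lx.toLinearMap := Matrix.toEuclideanLin.apply_symm_apply _
  have hQv : ∀ u : Fin n → ℝ, Lx ((WithLp.equiv 2 (Fin n → ℝ)).symm u)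
      = (WithLp.equiv 2 (Fin n → ℝ)).symm (Q *ᵥ u) := by
    intro u
    rw [WithLp.equiv_symm_apply, ← Matrix.toEuclideanLin_apply_piLp_toLp, hQL]
    rfl
  have hQA : ∀ c : EuclideanSpace ℝ (Fin m), Lx (f c) = g c := by
    intro c
    have h1 : f c = ((⟨f c, LinearMap.mem_range_self f c⟩ : LinearMap.range f)
        : EuclideanSpace ℝ (Fin n)) := rfl
    rw [h1, L.extend_apply]
    exact hφ c
  have hvec : ∀ c : Fin m → ℝ, Q *ᵥ (A *ᵥ c) = S *ᵥ c := by
    intro c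
    have h1 : Lx (f ((WithLp.equiv 2 (Fin m → ℝ)).symm c))
        = g ((WithLp.equiv 2 (Fin m → ℝ)).symm c) := hQA _
    rw [hf, hg, WithLp.equiv_symm_apply, Matrix.toEuclideanLin_apply_piLp_toLp,
      Matrix.toEuclideanLin_apply_piLp_toLp, ← WithLp.equiv_symm_apply, hQv] at h1
    exact (WithLp.equiv 2 (Fin n → ℝ)).symm.injective h1
  have hinner : ∀ u v : Fin n → ℝ, (Q *ᵥ u) ⬝ᵥ (Q *ᵥ v) = u ⬝ᵥ v := by
    intro u v
    have h3 := Lx.inner_map_map ((WithLp.equiv 2 (Fin n → ℝ)).symm u)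
      ((WithLp.equiv 2 (Fin n → ℝ)).symm v)
    rw [hQv, hQv] at h3
    rw [dotProduct_comm (Q *ᵥ u), dotProduct_comm u]
    simpa [PiLp.inner_apply, RCLike.inner_apply, PiLp.toLp_apply, dotProduct]
      using h3
  refine ⟨Q, ?_, ?_⟩
  · ext i j
    have h1 : (Qᵀ * Q) i j = (Q *ᵥ Pi.single i 1) ⬝ᵥ (Q *ᵥ Pi.single j 1) := by
      simp [Matrix.mul_apply, Matrix.transpose_apply, dotProduct]
    rw [h1, hinner]
    simp [dotProduct, Pi.single_apply, Matrix.one_apply, eq_comm]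
  · ext i j
    have h1 := congrFun (by rw [← Matrix.mulVec_mulVec]; exact hvec (Pi.single j 1) :
      (Q * A) *ᵥ Pi.single j 1 = S *ᵥ Pi.single j 1) i
    simpa using h1


lemma dotv_eq_mul {n m : ℕ} (A : Matrix (Fin n) (Fin m) ℝ) (j k : Fin m) :
    dotv (_root_.col A j) (_root_.col A k) = (Aᵀ*A) j k := by
  simp [dotv, _root_.col, Matrix.mul_apply, Matrix.transpose_apply]

lemma enormv_pos {n : ℕ} {u : Fin n → ℝ} (hu : u ≠ 0) : 0 < enormv u := by
  rw [enormv]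
  apply Real.sqrt_pos.mpr
  rw [dotv]
  obtain ⟨i, hi⟩ : ∃ i, u i ≠ 0 := by
    by_contra hcon
    push_neg at hcon
    exact hu (funext hcon)
  exact Finset.sum_pos' (fun i _ => mul_self_nonneg _)
    ⟨i, Finset.mem_univ i, mul_self_pos.mpr hi⟩

lemma enormv_smul {n : ℕ} (c : ℝ) (hc : 0 ≤ c) (u : Fin n → ℝ) :
    enormv (fun i => c * u i) = c * enormv u := by
  rw [enormv, enormv, dotv, dotv]
  have : ∑ i, (c * u i) * (c * u i) = c ^ 2 * ∑ i, u i * u i := by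
    rw [Finset.mul_sum]; exact Finset.sum_congr rfl fun i _ => by ring
  rw [this, Real.sqrt_mul (sq_nonneg c), Real.sqrt_sq hc]

/-- Two matrices with nonzero columns have the same cosine similarity matrix
iff one is obtained from the other by an orthogonal transformation and a positive
diagonal column rescaling. -/
theorem cosSim_eq_iff_orthogonal_diag {n m : ℕ} (hn : 0 < n) (hm : 0 < m) (hmn : m ≤ n)
    (O S : Matrix (Fin n) (Fin m) ℝ)
    (hO : ∀ j, _root_.col O j ≠ 0) (hS : ∀ j, _root_.col S j ≠ 0) :
    cosSim O = cosSim S ↔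
      ∃ (Q : Matrix (Fin n) (Fin n) ℝ) (d : Fin m → ℝ),
        Qᵀ * Q = 1 ∧ (∀ j, 0 < d j) ∧ Q * O * Matrix.diagonal d = S := by
  constructor
  · intro hEq
    have hapos : ∀ j, 0 < enormv (_root_.col O j) := fun j => enormv_pos (hO j)
    have hbpos : ∀ j, 0 < enormv (_root_.col S j) := fun j => enormv_pos (hS j)
    set d : Fin m → ℝ := fun j => enormv (_root_.col S j) / enormv (_root_.col O j) with hd
    have hdpos : ∀ j, 0 < d j := fun j => div_pos (hbpos j) (hapos j)
    have key : ∀ j k, dotv (_root_.col S j) (_root_.col S k)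
        = d j * d k * dotv (_root_.col O j) (_root_.col O k) := by
      intro j k
      have hc := congrFun (congrFun hEq j) k
      rw [cosSim, cosSim,
        div_eq_div_iff (mul_pos (hapos j) (hapos k)).ne' (mul_pos (hbpos j) (hbpos k)).ne'] at hc
      have hane : (enormv (_root_.col O j) * enormv (_root_.col O k)) ≠ 0 :=
        (mul_pos (hapos j) (hapos k)).ne'
      have h5 : d j * d k * dotv (_root_.col O j) (_root_.col O k)
            * (enormv (_root_.col O j) * enormv (_root_.col O k))
          = dotv (_root_.col O j) (_root_.col O k)
            * (enormv (_root_.col S j) * enormv (_root_.col S k)) := by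
        rw [hd]
        field_simp
        rw [div_eq_iff hane]
        ring
      rw [hc] at h5
      exact (mul_right_cancel₀ hane h5).symm
    have hcolA : ∀ j, _root_.col (O * Matrix.diagonal d) j = fun i => O i j * d j := by
      intro j; funext i; simp [_root_.col, Matrix.mul_diagonal]
    have hAA : (O * Matrix.diagonal d)ᵀ * (O * Matrix.diagonal d) = Sᵀ * S := by
      ext j k
      rw [← dotv_eq_mul, ← dotv_eq_mul, key j k, dotv, dotv, hcolA, hcolA, Finset.mul_sum]
      exact Finset.sum_congr rfl fun i _ => by simp only [_root_.col]; ring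
    obtain ⟨Q, hQ1, hQ2⟩ := exists_orthogonal (O * Matrix.diagonal d) S hAA
    exact ⟨Q, d, hQ1, hdpos, by rw [Matrix.mul_assoc]; exact hQ2⟩
  · rintro ⟨Q, d, hQ1, hdpos, hQ2⟩
    have hB : (Q * O)ᵀ * (Q * O) = Oᵀ * O := by
      rw [Matrix.transpose_mul, Matrix.mul_assoc, ← Matrix.mul_assoc Qᵀ, hQ1, Matrix.one_mul]
    have hcolS : ∀ j, _root_.col S j = fun i => (Q * O) i j * d j := by
      intro j; funext i
      rw [← hQ2]
      simp [_root_.col, Matrix.mul_diagonal]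
    have hSS : ∀ j k, dotv (_root_.col S j) (_root_.col S k)
        = d j * d k * dotv (_root_.col O j) (_root_.col O k) := by
      intro j k
      rw [hcolS, hcolS, dotv]
      have h1 : ∑ i, ((Q * O) i j * d j) * ((Q * O) i k * d k)
          = d j * d k * ∑ i, (Q * O) i j * (Q * O) i k := by
        rw [Finset.mul_sum]; exact Finset.sum_congr rfl fun i _ => by ring
      rw [h1]
      congr 1
      have h2 : (∑ i, (Q * O) i j * (Q * O) i k)
          = dotv (_root_.col (Q * O) j) (_root_.col (Q * O) k) := rfl
      rw [h2, dotv_eq_mul, hB, ← dotv_eq_mul]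
    have hnS : ∀ j, enormv (_root_.col S j) = d j * enormv (_root_.col O j) := by
      intro j
      rw [hcolS]
      have h4 : (fun i => (Q * O) i j * d j) = fun i => d j * _root_.col (Q * O) j i := by
        funext i; simp only [_root_.col]; ring
      rw [h4, enormv_smul (d j) (hdpos j).le]
      congr 1
      rw [enormv, enormv, dotv_eq_mul, dotv_eq_mul, hB]
    funext j k
    rw [cosSim, cosSim, hSS j k, hnS j, hnS k]
    have h3 : (d j * enormv (_root_.col O j)) * (d k * enormv (_root_.col O k))
        = (d j * d k) * (enormv (_root_.col O j) * enormv (_root_.col O k)) := by ring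
    rw [h3, mul_div_mul_left _ _ (mul_pos (hdpos j) (hdpos k)).ne']
end

section
/- Let O ∈ ℝ^{n×m} have all columns nonzero, let M ∈ ℝ^{p×n} satisfy MᵀM = I_n, and let N ∈ ℝ^{m×m} be diagonal with strictly positive diagonal entries. Then the matrix S = M O N ∈ ℝ^{p×m} has all columns nonzero and S_c(S) = S_c(O). -/
open Matrix

lemma dotv_eq_dot {n : ℕ} (u v : Fin n → ℝ) : dotv u v = u ⬝ᵥ v := rfl

lemma dotv_mulVec {n p : ℕ} (M : Matrix (Fin p) (Fin n) ℝ) (hM : Mᵀ * M = 1)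
    (u v : Fin n → ℝ) : dotv (M *ᵥ u) (M *ᵥ v) = dotv u v := by
  rw [dotv_eq_dot, dotv_eq_dot, Matrix.dotProduct_mulVec,
    show M *ᵥ u = u ᵥ* Mᵀ from (Matrix.vecMul_transpose M u).symm,
    Matrix.vecMul_vecMul, hM, Matrix.vecMul_one]

lemma dotv_smul_smul {n : ℕ} (a b : ℝ) (u v : Fin n → ℝ) :
    dotv (a • u) (b • v) = a * b * dotv u v := by
  simp only [dotv, Pi.smul_apply, smul_eq_mul, Finset.mul_sum]
  congr 1; funext i; ring

lemma dotv_self_pos {n : ℕ} {u : Fin n → ℝ} (hu : u ≠ 0) : 0 < dotv u u := by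
  obtain ⟨i, hi⟩ := Function.ne_iff.mp hu
  exact Finset.sum_pos' (fun i _ => mul_self_nonneg (u i))
    ⟨i, Finset.mem_univ i, mul_self_pos.mpr hi⟩

/-- Applying a matrix with orthonormal columns on the left and a positive
diagonal matrix on the right preserves nonzeroness of columns and the cosine similarity. -/
theorem cosSim_of_orthonormal_mul_diag {n m p : ℕ}
    (O : Matrix (Fin n) (Fin m) ℝ) (hO : ∀ j, _root_.col O j ≠ 0)
    (M : Matrix (Fin p) (Fin n) ℝ) (hM : Mᵀ * M = 1)
    (d : Fin m → ℝ) (hd : ∀ j, 0 < d j)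
    (S : Matrix (Fin p) (Fin m) ℝ) (hS : S = M * O * Matrix.diagonal d) :
    (∀ j, _root_.col S j ≠ 0) ∧ cosSim S = cosSim O := by
  have hcol : ∀ j, _root_.col S j = d j • (M *ᵥ _root_.col O j) := by
    intro j
    funext i
    subst hS
    simp only [_root_.col, Matrix.mul_apply, Matrix.mulVec, dotProduct,
      Matrix.diagonal_apply, Pi.smul_apply, smul_eq_mul, Finset.mul_sum,
      Finset.sum_ite_eq, Finset.mem_univ, if_true]
    simp only [mul_ite, mul_zero, Finset.sum_ite_eq', Finset.mem_univ, if_true]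
    rw [Finset.sum_mul]
    refine Finset.sum_congr rfl fun k _ => ?_
    ring
  have hdot : ∀ j k, dotv (_root_.col S j) (_root_.col S k)
      = d j * d k * dotv (_root_.col O j) (_root_.col O k) := by
    intro j k
    rw [hcol, hcol, dotv_smul_smul, dotv_mulVec M hM]
  have hnorm : ∀ j, enormv (_root_.col S j) = d j * enormv (_root_.col O j) := by
    intro j
    rw [enormv, enormv, hdot, show d j * d j * dotv (_root_.col O j) (_root_.col O j)
      = (d j)^2 * dotv (_root_.col O j) (_root_.col O j) by ring,
      Real.sqrt_mul (sq_nonneg _), Real.sqrt_sq (hd j).le]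
  have hne : ∀ j, _root_.col S j ≠ 0 := by
    intro j h
    have h1 := hdot j j
    rw [h] at h1
    have h0 : dotv (0 : Fin p → ℝ) 0 = 0 := by simp [dotv]
    rw [h0] at h1
    have hp : 0 < d j * d j * dotv (_root_.col O j) (_root_.col O j) :=
      mul_pos (mul_pos (hd j) (hd j)) (dotv_self_pos (hO j))
    rw [← h1] at hp
    exact lt_irrefl 0 hp
  refine ⟨hne, ?_⟩
  funext j k
  unfold cosSim
  rw [hdot, hnorm, hnorm,
    show d j * enormv (_root_.col O j) * (d k * enormv (_root_.col O k))
      = (d j * d k) * (enormv (_root_.col O j) * enormv (_root_.col O k)) by ring,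
    mul_div_mul_left _ _ (mul_pos (hd j) (hd k)).ne']
end

section
/- Let n ≤ p, let O ∈ ℝ^{n×m} and S ∈ ℝ^{p×m} have all columns nonzero, and suppose S_c(O) = S_c(S). Then there exist a matrix M ∈ ℝ^{p×n} with MᵀM = I_n and a diagonal matrix N ∈ ℝ^{m×m} with strictly positive diagonal entries such that M O N = S. -/
open Matrix RealInnerProductSpace

section AuxCS
variable {n p : ℕ}

lemma inner_eq_sum (x y : EuclideanSpace ℝ (Fin n)) : ⟪x, y⟫ = ∑ i, x i * y i := by
  simp [PiLp.inner_apply, RCLike.inner_apply, mul_comm]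

lemma norm_eq_sum (x : EuclideanSpace ℝ (Fin n)) : ‖x‖ = Real.sqrt (∑ i, x i * x i) := by
  rw [norm_eq_sqrt_real_inner, inner_eq_sum]

noncomputable def Jfun (hnp : n ≤ p) (x : EuclideanSpace ℝ (Fin n)) : EuclideanSpace ℝ (Fin p) :=
  WithLp.toLp 2 (fun i => if h : (i : ℕ) < n then x ⟨i, h⟩ else 0)

lemma Jfun_sum (hnp : n ≤ p) (x y : EuclideanSpace ℝ (Fin n)) :
    ∑ i, Jfun hnp x i * Jfun hnp y i = ∑ i, x i * y i := by
  rw [show (Finset.univ : Finset (Fin p)).sum (fun i => Jfun hnp x i * Jfun hnp y i)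
      = ∑ i ∈ Finset.univ.map (Fin.castLEEmb hnp), Jfun hnp x i * Jfun hnp y i from
    (Finset.sum_subset (Finset.subset_univ _) (fun i _ hi => by
      have hin : ¬ ((i : ℕ) < n) := by
        intro hlt
        exact hi (Finset.mem_map.mpr ⟨⟨(i : ℕ), hlt⟩, Finset.mem_univ _, Fin.ext rfl⟩)
      simp [Jfun, hin])).symm]
  rw [Finset.sum_map]
  refine Finset.sum_congr rfl (fun k _ => ?_)
  simp [Jfun, Fin.castLEEmb, Fin.castLE]

noncomputable def Jiso (hnp : n ≤ p) :
    EuclideanSpace ℝ (Fin n) →ₗᵢ[ℝ] EuclideanSpace ℝ (Fin p) where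
  toLinearMap :=
    { toFun := Jfun hnp
      map_add' := by
        intro x y; ext i
        show Jfun hnp (x + y) i = Jfun hnp x i + Jfun hnp y i
        simp only [Jfun]
        split <;> simp [PiLp.add_apply]
      map_smul' := by
        intro c x; ext i
        show Jfun hnp (c • x) i = c * Jfun hnp x i
        simp only [Jfun]
        split <;> simp [PiLp.smul_apply] }
  norm_map' := by
    intro x
    show ‖Jfun hnp x‖ = ‖x‖
    rw [norm_eq_sum, norm_eq_sum, Jfun_sum]

noncomputable def combo {m : ℕ} (w : Fin m → EuclideanSpace ℝ (Fin p)) :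
    (Fin m → ℝ) →ₗ[ℝ] EuclideanSpace ℝ (Fin p) where
  toFun := fun c => ∑ j, c j • w j
  map_add' := by intro c c'; simp [add_smul, Finset.sum_add_distrib]
  map_smul' := by intro r c; simp [Finset.smul_sum, smul_smul]

lemma combo_inner {m : ℕ} (w w' : Fin m → EuclideanSpace ℝ (Fin p)) (c c' : Fin m → ℝ) :
    ⟪combo w c, combo w' c'⟫ = ∑ j, ∑ k, c j * c' k * ⟪w j, w' k⟫ := by
  simp only [combo, LinearMap.coe_mk, AddHom.coe_mk, sum_inner, inner_sum,
    real_inner_smul_left, real_inner_smul_right]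
  rw [Finset.sum_comm]
  refine Finset.sum_congr rfl fun j _ => Finset.sum_congr rfl fun k _ => by ring

lemma combo_single {m : ℕ} (w : Fin m → EuclideanSpace ℝ (Fin p)) (j : Fin m) :
    combo w (Pi.single j 1) = w j := by
  simp only [combo, LinearMap.coe_mk, AddHom.coe_mk]
  rw [Finset.sum_eq_single j] <;> simp +contextual [Pi.single_apply]

end AuxCS

/-- If two matrices with nonzero columns (with `n ≤ p`) have the same cosine
similarity matrix, then one is obtained from the other via a matrix with orthonormal
columns and a positive diagonal rescaling. -/
theorem exists_orthonormal_diag_of_cosSim_eq {n m p : ℕ} (hnp : n ≤ p)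
    (O : Matrix (Fin n) (Fin m) ℝ) (S : Matrix (Fin p) (Fin m) ℝ)
    (hO : ∀ j, _root_.col O j ≠ 0) (hS : ∀ j, _root_.col S j ≠ 0)
    (h : cosSim O = cosSim S) :
    ∃ (M : Matrix (Fin p) (Fin n) ℝ) (d : Fin m → ℝ),
      Mᵀ * M = 1 ∧ (∀ j, 0 < d j) ∧ M * O * Matrix.diagonal d = S := by
  classical
  set En := EuclideanSpace ℝ (Fin n)
  set Ep := EuclideanSpace ℝ (Fin p)
  let oc : Fin m → En := fun j => WithLp.toLp 2 (_root_.col O j)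
  let sc : Fin m → Ep := fun j => WithLp.toLp 2 (_root_.col S j)
  have hoc : ∀ j, oc j ≠ 0 := fun j hj => hO j (by simpa [oc] using congrArg WithLp.ofLp hj)
  have hsc : ∀ j, sc j ≠ 0 := fun j hj => hS j (by simpa [sc] using congrArg WithLp.ofLp hj)
  have hocn : ∀ j, (0:ℝ) < ‖oc j‖ := fun j => norm_pos_iff.mpr (hoc j)
  have hscn : ∀ j, (0:ℝ) < ‖sc j‖ := fun j => norm_pos_iff.mpr (hsc j)
  -- relate dotv / enormv to inner / norm
  have hdotO : ∀ j k, dotv (_root_.col O j) (_root_.col O k) = ⟪oc j, oc k⟫ := fun j k =>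
    (inner_eq_sum (oc j) (oc k)).symm
  have hdotS : ∀ j k, dotv (_root_.col S j) (_root_.col S k) = ⟪sc j, sc k⟫ := fun j k =>
    (inner_eq_sum (sc j) (sc k)).symm
  have henO : ∀ j, enormv (_root_.col O j) = ‖oc j‖ := fun j => by
    rw [norm_eq_sum]; rfl
  have henS : ∀ j, enormv (_root_.col S j) = ‖sc j‖ := fun j => by
    rw [norm_eq_sum]; rfl
  -- normalized columns
  let u : Fin m → Ep := fun j => Jiso hnp ((‖oc j‖)⁻¹ • oc j)
  let v : Fin m → Ep := fun j => (‖sc j‖)⁻¹ • sc j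
  have hgram : ∀ j k, ⟪u j, u k⟫ = ⟪v j, v k⟫ := by
    intro j k
    have h1 : ⟪u j, u k⟫ = ⟪oc j, oc k⟫ / (‖oc j‖ * ‖oc k‖) := by
      rw [show ⟪u j, u k⟫ = ⟪(‖oc j‖)⁻¹ • oc j, (‖oc k‖)⁻¹ • oc k⟫ from
        (Jiso hnp).inner_map_map _ _]
      rw [real_inner_smul_left, real_inner_smul_right]
      field_simp
    have h2 : ⟪v j, v k⟫ = ⟪sc j, sc k⟫ / (‖sc j‖ * ‖sc k‖) := by
      rw [show v j = (‖sc j‖)⁻¹ • sc j from rfl, show v k = (‖sc k‖)⁻¹ • sc k from rfl,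
        real_inner_smul_left, real_inner_smul_right]
      field_simp
    have hc := congrFun (congrFun h j) k
    simp only [cosSim, hdotO, hdotS, henO, henS] at hc
    rw [h1, h2, hc]
  -- norms of combinations agree
  have hnorm : ∀ c : Fin m → ℝ, ‖combo v c‖ = ‖combo u c‖ := by
    intro c
    rw [norm_eq_sqrt_real_inner, norm_eq_sqrt_real_inner, combo_inner, combo_inner]
    congr 1
    exact Finset.sum_congr rfl fun j _ => Finset.sum_congr rfl fun k _ => by
      rw [hgram j k]
  have hker : LinearMap.ker (combo u) ≤ LinearMap.ker (combo v) := by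
    intro c hc
    rw [LinearMap.mem_ker] at hc ⊢
    have h0 : ‖combo v c‖ = 0 := by rw [hnorm c, hc, norm_zero]
    exact norm_eq_zero.mp h0
  -- isometry on the range of `combo u`
  let L' := (LinearMap.ker (combo u)).liftQ (combo v) hker
  let e := (combo u).quotKerEquivRange
  let L0 : ↥(LinearMap.range (combo u)) →ₗ[ℝ] Ep := L'.comp (e.symm.toLinearMap)
  have hL0 : ∀ c : Fin m → ℝ, L0 ⟨combo u c, LinearMap.mem_range_self _ c⟩ = combo v c := by
    intro c
    have he : e (Submodule.Quotient.mk c) = ⟨combo u c, LinearMap.mem_range_self _ c⟩ :=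
      Subtype.ext ((combo u).quotKerEquivRange_apply_mk c)
    have : e.symm ⟨combo u c, LinearMap.mem_range_self _ c⟩ = Submodule.Quotient.mk c := by
      rw [← he, LinearEquiv.symm_apply_apply]
    show L' (e.symm ⟨combo u c, LinearMap.mem_range_self _ c⟩) = combo v c
    rw [this]
    exact Submodule.liftQ_apply _ _ _
  let L0iso : ↥(LinearMap.range (combo u)) →ₗᵢ[ℝ] Ep :=
    { toLinearMap := L0
      norm_map' := by
        rintro ⟨x, hx⟩
        obtain ⟨c, rfl⟩ := hx
        rw [hL0 c, hnorm c]
        rfl }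
  let T := L0iso.extend
  have hT : ∀ c : Fin m → ℝ, T (combo u c) = combo v c := by
    intro c
    have := L0iso.extend_apply ⟨combo u c, LinearMap.mem_range_self _ c⟩
    rw [this]
    exact hL0 c
  have hTu : ∀ j, T (u j) = v j := by
    intro j
    have := hT (Pi.single j 1)
    rwa [combo_single, combo_single] at this
  -- the matrix of T ∘ J
  let W : En →ₗᵢ[ℝ] Ep := T.comp (Jiso hnp)
  let M : Matrix (Fin p) (Fin n) ℝ := fun i k => W (EuclideanSpace.single k 1) i
  have hMW : ∀ (x : En) (i : Fin p), (∑ k, M i k * x k) = W x i := by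
    intro x i
    have hx : x = ∑ k, x k • EuclideanSpace.single k (1:ℝ) := by
      ext i'
      rw [WithLp.ofLp_sum, Finset.sum_apply]
      simp [EuclideanSpace.single_apply, eq_comm]
    conv_rhs => rw [hx]
    rw [map_sum]
    rw [WithLp.ofLp_sum, Finset.sum_apply]
    refine Finset.sum_congr rfl fun k _ => ?_
    rw [_root_.map_smul]
    show M i k * x k = (x k • W (EuclideanSpace.single k 1)) i
    rw [PiLp.smul_apply, smul_eq_mul, mul_comm]
  refine ⟨M, fun j => ‖sc j‖ / ‖oc j‖, ?_, fun j => div_pos (hscn j) (hocn j), ?_⟩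
  · ext a b
    rw [Matrix.mul_apply, Matrix.one_apply]
    have : ∑ i, Mᵀ a i * M i b = ⟪W (EuclideanSpace.single a 1), W (EuclideanSpace.single b 1)⟫ := by
      rw [inner_eq_sum]
      exact Finset.sum_congr rfl fun i _ => rfl
    rw [this, W.inner_map_map]
    rw [inner_eq_sum]
    by_cases hab : a = b <;>
      simp [EuclideanSpace.single_apply, hab, eq_comm, Finset.sum_ite_eq]
  · ext i j
    simp only [Matrix.mul_apply]
    have h1 : ∑ k, (∑ l, M i l * O l k) * Matrix.diagonal (fun j => ‖sc j‖ / ‖oc j‖) k j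
        = (∑ l, M i l * O l j) * (‖sc j‖ / ‖oc j‖) := by
      rw [Finset.sum_eq_single j]
      · rw [Matrix.diagonal_apply_eq]
      · intro k _ hk
        rw [Matrix.diagonal_apply_ne _ hk, mul_zero]
      · intro hj
        exact absurd (Finset.mem_univ j) hj
    rw [h1]
    have h2 : (∑ l, M i l * O l j) = W (oc j) i := hMW (oc j) i
    have h3 : W (oc j) = ‖oc j‖ • v j := by
      have : Jiso hnp (oc j) = ‖oc j‖ • u j := by
        show Jiso hnp (oc j) = ‖oc j‖ • Jiso hnp ((‖oc j‖)⁻¹ • oc j)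
        rw [← (Jiso hnp).map_smul, smul_inv_smul₀ (ne_of_gt (hocn j))]
      show T (Jiso hnp (oc j)) = ‖oc j‖ • v j
      rw [this, T.map_smul, hTu j]
    rw [h2, h3]
    show (‖oc j‖ • ((‖sc j‖)⁻¹ • sc j)) i * (‖sc j‖ / ‖oc j‖) = S i j
    rw [PiLp.smul_apply, PiLp.smul_apply, smul_eq_mul, smul_eq_mul]
    have : sc j i = S i j := rfl
    rw [this]
    have h4 : ‖oc j‖ ≠ 0 := ne_of_gt (hocn j)
    have h5 : ‖sc j‖ ≠ 0 := ne_of_gt (hscn j)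
    field_simp
end

section
/- Let A, B ∈ ℝ^{n×m}, let U, V ∈ ℝ^{n×n} be orthogonal matrices and Σ ∈ ℝ^{n×n} diagonal with nonnegative diagonal entries such that B Aᵀ = U Σ Vᵀ. If d ∈ ℝ^n satisfies dᵀ B = 0, then dᵀ (U I_Σ Vᵀ A) = 0; in particular, if every column of B has zero mean, then every column of U I_Σ Vᵀ A has zero mean. -/
open Matrix

/-- With `B Aᵀ = U Σ Vᵀ` (SVD data), any vector `d` with `dᵀ B = 0` also
annihilates `U I_Σ Vᵀ A`; in particular, if every column of `B` has zero mean, then every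
column of `U I_Σ Vᵀ A` has zero mean. -/
theorem vecMul_Procrustes_eq_zero {n m : ℕ}
    (A B : Matrix (Fin n) (Fin m) ℝ)
    (U V : Matrix (Fin n) (Fin n) ℝ) (hU : Uᵀ * U = 1) (hV : Vᵀ * V = 1)
    (σ : Fin n → ℝ) (hσ : ∀ i, 0 ≤ σ i)
    (hSVD : B * Aᵀ = U * Matrix.diagonal σ * Vᵀ) :
    (∀ d : Fin n → ℝ, Matrix.vecMul d B = 0 →
      Matrix.vecMul d (U * Isig σ * Vᵀ * A) = 0) ∧
    (Matrix.vecMul (fun _ => (1 : ℝ)) B = 0 →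
      Matrix.vecMul (fun _ => (1 : ℝ)) (U * Isig σ * Vᵀ * A) = 0) := by
  have main : ∀ d : Fin n → ℝ, Matrix.vecMul d B = 0 →
      Matrix.vecMul d (U * Isig σ * Vᵀ * A) = 0 := by
    intro d hd
    -- d (B Aᵀ) = 0
    have h1 : Matrix.vecMul d (U * Matrix.diagonal σ * Vᵀ) = 0 := by
      rw [← hSVD, ← Matrix.vecMul_vecMul, hd, Matrix.zero_vecMul]
    -- multiply on the right by V
    have h2 : Matrix.vecMul d (U * Matrix.diagonal σ) = 0 := by
      have := congrArg (fun w => Matrix.vecMul w V) h1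
      simpa [Matrix.vecMul_vecMul, Matrix.mul_assoc, hV, Matrix.zero_vecMul] using this
    have h3 : Matrix.vecMul (Matrix.vecMul d U) (Matrix.diagonal σ) = 0 := by
      rw [Matrix.vecMul_vecMul]; exact h2
    have h4 : ∀ i, Matrix.vecMul d U i * σ i = 0 := by
      intro i
      have := congrFun h3 i
      simpa [Matrix.vecMul_diagonal] using this
    have h5 : Matrix.vecMul (Matrix.vecMul d U) (Isig σ) = 0 := by
      funext i
      have := h4 i
      by_cases hpos : 0 < σ i
      · have : Matrix.vecMul d U i = 0 := by
          rcases mul_eq_zero.mp (h4 i) with h | h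
          · exact h
          · exact absurd h (ne_of_gt hpos)
        simp [Isig, Matrix.vecMul_diagonal, hpos, this]
      · simp [Isig, Matrix.vecMul_diagonal, hpos]
    calc Matrix.vecMul d (U * Isig σ * Vᵀ * A)
        = Matrix.vecMul (Matrix.vecMul (Matrix.vecMul (Matrix.vecMul d U) (Isig σ)) Vᵀ) A := by
          simp [Matrix.vecMul_vecMul]
      _ = 0 := by rw [h5, Matrix.zero_vecMul, Matrix.zero_vecMul]
  exact ⟨main, main (fun _ => 1)⟩
end

section
/- Let Q, U, V ∈ ℝ^{n×n} be orthogonal matrices and let Σ ∈ ℝ^{n×n} be diagonal with nonnegative diagonal entries. Then tr(Q U Σ Vᵀ) ≤ tr(Σ). -/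
open Matrix

/-- For orthogonal `Q, U, V` and diagonal `Σ` with nonnegative entries,
`tr(Q U Σ Vᵀ) ≤ tr(Σ)`. -/
theorem trace_orthogonal_mul_le {n : ℕ}
    (Q U V : Matrix (Fin n) (Fin n) ℝ)
    (hQ : Qᵀ * Q = 1) (hU : Uᵀ * U = 1) (hV : Vᵀ * V = 1)
    (σ : Fin n → ℝ) (hσ : ∀ i, 0 ≤ σ i) :
    Matrix.trace (Q * U * Matrix.diagonal σ * Vᵀ) ≤ Matrix.trace (Matrix.diagonal σ) := by
  have hW : (Vᵀ * (Q * U))ᵀ * (Vᵀ * (Q * U)) = 1 := by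
    have hV' : V * Vᵀ = 1 := mul_eq_one_comm.mp hV
    have hQ' : Q * Qᵀ = 1 := mul_eq_one_comm.mp hQ
    simp only [Matrix.transpose_mul, Matrix.transpose_transpose]
    calc (Uᵀ * Qᵀ) * V * (Vᵀ * (Q * U)) = Uᵀ * (Qᵀ * ((V * Vᵀ) * Q)) * U := by
          noncomm_ring
      _ = 1 := by rw [hV']; simp [← Matrix.mul_assoc, hQ, hU]
  set W := Vᵀ * (Q * U) with hWdef
  have hdiag : ∀ i, W i i ≤ 1 := by
    intro i
    have h1 : (Wᵀ * W) i i = 1 := by rw [hW]; simp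
    have h2 : ∑ k, W k i ^ 2 = 1 := by
      rw [← h1]; simp [Matrix.mul_apply, Matrix.transpose_apply, sq]
    have h3 : W i i ^ 2 ≤ 1 := by
      rw [← h2]
      exact Finset.single_le_sum (f := fun k => W k i ^ 2) (fun k _ => sq_nonneg _) (Finset.mem_univ i)
    nlinarith [sq_nonneg (W i i - 1)]
  have htr : Matrix.trace (Q * U * Matrix.diagonal σ * Vᵀ)
      = Matrix.trace (W * Matrix.diagonal σ) := by
    rw [Matrix.trace_mul_comm]
    congr 1
    rw [hWdef]
    noncomm_ring
  rw [htr, Matrix.trace, Matrix.trace]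
  apply Finset.sum_le_sum
  intro i _
  simp only [Matrix.diag_apply, Matrix.mul_diagonal, Matrix.diagonal_apply_eq]
  exact mul_le_of_le_one_left (hσ i) (hdiag i)
end

section
/- (Orthogonal Procrustes) Let A, B ∈ ℝ^{n×m}, and let U, V ∈ ℝ^{n×n} be orthogonal matrices and Σ ∈ ℝ^{n×n} diagonal with nonnegative diagonal entries such that B Aᵀ = U Σ Vᵀ. Then for every orthogonal matrix Q ∈ ℝ^{n×n}, ‖U Vᵀ A − B‖_F ≤ ‖Q A − B‖_F; that is, Q* = U Vᵀ minimizes ‖Q A − B‖_F over orthogonal matrices Q. -/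
open Matrix

lemma sum_mul_eq_trace {n m : ℕ} (M N : Matrix (Fin n) (Fin m) ℝ) :
    ∑ i, ∑ j, M i j * N i j = Matrix.trace (M * Nᵀ) := by
  simp [Matrix.trace, Matrix.mul_apply, Matrix.diag]

lemma sum_sq_eq_trace {n m : ℕ} (M : Matrix (Fin n) (Fin m) ℝ) :
    ∑ i, ∑ j, (M i j) ^ 2 = Matrix.trace (M * Mᵀ) := by
  rw [← sum_mul_eq_trace]
  simp [pow_two]

/-- Orthogonal Procrustes: with `B Aᵀ = U Σ Vᵀ` (SVD data), the orthogonal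
matrix `U Vᵀ` minimizes `‖Q A − B‖_F` over all orthogonal matrices `Q`. -/
theorem orthogonal_procrustes {n m : ℕ}
    (A B : Matrix (Fin n) (Fin m) ℝ)
    (U V : Matrix (Fin n) (Fin n) ℝ) (hU : Uᵀ * U = 1) (hV : Vᵀ * V = 1)
    (σ : Fin n → ℝ) (hσ : ∀ i, 0 ≤ σ i)
    (hSVD : B * Aᵀ = U * Matrix.diagonal σ * Vᵀ) :
    ∀ Q : Matrix (Fin n) (Fin n) ℝ, Qᵀ * Q = 1 →
      frob (U * Vᵀ * A - B) ≤ frob (Q * A - B) := by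
  intro Q hQ
  have hUU : U * Uᵀ = 1 := mul_eq_one_comm.mp hU
  have hVV : V * Vᵀ = 1 := mul_eq_one_comm.mp hV
  have hQQ : Q * Qᵀ = 1 := mul_eq_one_comm.mp hQ
  have cancel : ∀ (M N X : Matrix (Fin n) (Fin n) ℝ), M * N = 1 → M * (N * X) = X := by
    intro M N X h; rw [← Matrix.mul_assoc, h, Matrix.one_mul]
  have hABt : A * Bᵀ = V * Matrix.diagonal σ * Uᵀ := by
    have := congrArg Matrix.transpose hSVD
    simpa [Matrix.transpose_mul, Matrix.mul_assoc] using this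
  -- expansion of the squared Frobenius norm
  have expand : ∀ R : Matrix (Fin n) (Fin n) ℝ, Rᵀ * R = 1 →
      ∑ i, ∑ j, ((R * A - B) i j) ^ 2
        = (∑ i, ∑ j, (A i j) ^ 2) + (∑ i, ∑ j, (B i j) ^ 2)
          - 2 * Matrix.trace (R * (A * Bᵀ)) := by
    intro R hR
    have h1 : ∀ i j, ((R * A - B) i j) ^ 2
        = ((R * A) i j) ^ 2 - 2 * ((R * A) i j * B i j) + (B i j) ^ 2 := by
      intro i j; simp [Matrix.sub_apply]; ring
    have hRA : ∑ i, ∑ j, ((R * A) i j) ^ 2 = ∑ i, ∑ j, (A i j) ^ 2 := by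
      rw [sum_sq_eq_trace, sum_sq_eq_trace]
      rw [Matrix.transpose_mul, show R * A * (Aᵀ * Rᵀ) = R * (A * Aᵀ * Rᵀ) by
        simp [Matrix.mul_assoc], Matrix.trace_mul_comm]
      rw [show A * Aᵀ * Rᵀ * R = A * Aᵀ * (Rᵀ * R) by simp [Matrix.mul_assoc], hR,
        Matrix.mul_one]
    have hcross : ∑ i, ∑ j, (R * A) i j * B i j = Matrix.trace (R * (A * Bᵀ)) := by
      rw [sum_mul_eq_trace, Matrix.mul_assoc]
    calc ∑ i, ∑ j, ((R * A - B) i j) ^ 2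
        = ∑ i, ∑ j, (((R * A) i j) ^ 2 - 2 * ((R * A) i j * B i j) + (B i j) ^ 2) := by
          simp only [h1]
      _ = (∑ i, ∑ j, ((R * A) i j) ^ 2) - 2 * (∑ i, ∑ j, (R * A) i j * B i j)
            + (∑ i, ∑ j, (B i j) ^ 2) := by
          simp [Finset.sum_add_distrib, Finset.sum_sub_distrib, Finset.mul_sum]
      _ = _ := by rw [hRA, hcross]; ring
  -- the trace term for an orthogonal R
  have traceR : ∀ R : Matrix (Fin n) (Fin n) ℝ,
      Matrix.trace (R * (A * Bᵀ)) = ∑ i, (Uᵀ * R * V) i i * σ i := by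
    intro R
    rw [hABt, show R * (V * Matrix.diagonal σ * Uᵀ) = (R * V * Matrix.diagonal σ) * Uᵀ by
      simp [Matrix.mul_assoc], Matrix.trace_mul_comm,
      show Uᵀ * (R * V * Matrix.diagonal σ) = (Uᵀ * R * V) * Matrix.diagonal σ by
      simp [Matrix.mul_assoc]]
    simp [Matrix.trace, Matrix.diag, Matrix.mul_diagonal]
  -- bound on diagonal entries of orthogonal matrices
  have diag_le : ∀ (Z : Matrix (Fin n) (Fin n) ℝ), Zᵀ * Z = 1 → ∀ i, Z i i ≤ 1 := by
    intro Z hZ i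
    have h1 : ∑ k, Z k i * Z k i = 1 := by
      have := congrFun (congrFun hZ i) i
      simpa [Matrix.mul_apply, Matrix.one_apply] using this
    have h2 : Z i i * Z i i ≤ 1 := by
      rw [← h1]
      exact Finset.single_le_sum (fun k _ => mul_self_nonneg (Z k i)) (Finset.mem_univ i)
    nlinarith [mul_self_nonneg (Z i i - 1)]
  -- orthogonality of U * Vᵀ and of Z(Q)
  have hQV : (U * Vᵀ)ᵀ * (U * Vᵀ) = 1 := by
    rw [Matrix.transpose_mul, Matrix.transpose_transpose, Matrix.mul_assoc,
      cancel Uᵀ U Vᵀ hU, hVV]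
  have hZ : (Uᵀ * Q * V)ᵀ * (Uᵀ * Q * V) = 1 := by
    simp only [Matrix.transpose_mul, Matrix.transpose_transpose, Matrix.mul_assoc]
    rw [cancel U Uᵀ (Q * V) hUU, cancel Qᵀ Q V hQ, hV]
  have t1 : Matrix.trace ((U * Vᵀ) * (A * Bᵀ)) = ∑ i, σ i := by
    rw [traceR (U * Vᵀ), cancel Uᵀ U Vᵀ hU, hV]
    simp [Matrix.one_apply]
  have t2 : Matrix.trace (Q * (A * Bᵀ)) ≤ ∑ i, σ i := by
    rw [traceR Q]
    refine Finset.sum_le_sum fun i _ => ?_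
    have h1 := diag_le (Uᵀ * Q * V) hZ i
    nlinarith [hσ i]
  have e1 := expand (U * Vᵀ) hQV
  have e2 := expand Q hQ
  unfold frob
  apply Real.sqrt_le_sqrt
  rw [e1, e2, t1]
  linarith
end

section
/- Let A, B ∈ ℝ^{n×m}, and let U, V ∈ ℝ^{n×n} be orthogonal matrices and Σ ∈ ℝ^{n×n} diagonal with nonnegative diagonal entries such that B Aᵀ = U Σ Vᵀ. If rank(B Aᵀ) = rank(A), then U I_Σ Vᵀ A = U Vᵀ A. -/
open Matrix

/-- With `B Aᵀ = U Σ Vᵀ` (SVD data), if `rank(B Aᵀ) = rank(A)` then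
`U I_Σ Vᵀ A = U Vᵀ A`. -/
theorem Isig_mul_eq_of_rank_eq {n m : ℕ}
    (A B : Matrix (Fin n) (Fin m) ℝ)
    (U V : Matrix (Fin n) (Fin n) ℝ) (hU : Uᵀ * U = 1) (hV : Vᵀ * V = 1)
    (σ : Fin n → ℝ) (hσ : ∀ i, 0 ≤ σ i)
    (hSVD : B * Aᵀ = U * Matrix.diagonal σ * Vᵀ)
    (hrank : (B * Aᵀ).rank = A.rank) :
    U * Isig σ * Vᵀ * A = U * Vᵀ * A := by
  -- A * Bᵀ = V * Σ * Uᵀ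
  have hABt : A * Bᵀ = V * Matrix.diagonal σ * Uᵀ := by
    have := congrArg Matrix.transpose hSVD
    simpa [Matrix.transpose_mul, Matrix.mul_assoc] using this
  -- rank (A * Bᵀ) = rank A
  have hrank2 : (A * Bᵀ).rank = A.rank := by
    have h1 : (B * Aᵀ)ᵀ = A * Bᵀ := by simp [Matrix.transpose_mul]
    rw [← h1, Matrix.rank_transpose]; exact hrank
  -- range equality of mulVecLin
  have hle : LinearMap.range (A * Bᵀ).mulVecLin ≤ LinearMap.range A.mulVecLin := by
    rintro y ⟨x, rfl⟩
    exact ⟨Bᵀ.mulVec x, by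
      rw [Matrix.mulVecLin_apply, Matrix.mulVecLin_apply, Matrix.mulVec_mulVec]⟩
  have hrange : LinearMap.range (A * Bᵀ).mulVecLin = LinearMap.range A.mulVecLin := by
    apply Submodule.eq_of_le_of_finrank_eq hle
    exact hrank2
  -- key: rows of Vᵀ * A with σ i = 0 vanish
  have key : ∀ i j, σ i = 0 → (Vᵀ * A) i j = 0 := by
    intro i j hz
    -- column j of A is in the range of A.mulVecLin
    have hcol : (fun i => A i j) ∈ LinearMap.range A.mulVecLin := by
      refine ⟨Pi.single j 1, ?_⟩
      ext k
      simp [Matrix.mulVecLin_apply, Matrix.mulVec_single]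
    rw [← hrange] at hcol
    obtain ⟨x, hx⟩ := hcol
    have hx' : (A * Bᵀ).mulVec x = fun i => A i j := hx
    have hcomp : Vᵀ.mulVec ((A * Bᵀ).mulVec x) =
        (Matrix.diagonal σ * Uᵀ).mulVec x := by
      have hid : Vᵀ * (A * Bᵀ) = Matrix.diagonal σ * Uᵀ := by
        rw [hABt, ← Matrix.mul_assoc, ← Matrix.mul_assoc, hV, Matrix.one_mul]
      rw [Matrix.mulVec_mulVec, hid]
    have hval : (Vᵀ * A) i j = (Vᵀ.mulVec (fun i => A i j)) i := by
      simp [Matrix.mul_apply, Matrix.mulVec, dotProduct]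
    rw [hval, ← hx', hcomp, ← Matrix.mulVec_mulVec]
    simp [Matrix.mulVec_diagonal, hz]
  -- conclude
  have hmain : Isig σ * (Vᵀ * A) = Vᵀ * A := by
    ext i j
    rw [Isig, Matrix.diagonal_mul]
    by_cases h : 0 < σ i
    · simp [h]
    · have hz : σ i = 0 := le_antisymm (not_lt.mp h) (hσ i)
      simp [h, key i j hz]
  calc U * Isig σ * Vᵀ * A = U * (Isig σ * (Vᵀ * A)) := by
        simp [Matrix.mul_assoc]
    _ = U * (Vᵀ * A) := by rw [hmain]
    _ = U * Vᵀ * A := by simp [Matrix.mul_assoc]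
end

section
/- Let O, S ∈ ℝ^{n×m} where all centered columns Ō_j are nonzero, let μ ∈ ℝ^m, let σ ∈ ℝ^m with σ_j > 0 for all j, let N ∈ ℝ^{m×m} be the diagonal matrix with N_{jj} = σ_j√n/‖Ō_j‖, and let T = 𝟙μᵀ ∈ ℝ^{n×m}. Let U, V ∈ ℝ^{n×n} be orthogonal and Σ ∈ ℝ^{n×n} diagonal with nonnegative diagonal entries such that S̄(ŌN)ᵀ = UΣVᵀ, and assume rank(S̄(ŌN)ᵀ) = rank(ŌN). Set Ŝ = U I_Σ Vᵀ Ō N + T. Then for every matrix Ŝ' ∈ ℝ^{n×m} satisfying Mean(Ŝ'_j) = μ_j and Var(Ŝ'_j) = σ_j² for all j and Corr(Ŝ') = Corr(O), one has ‖Ŝ − S‖_F ≤ ‖Ŝ' − S‖_F; that is, Ŝ is a closest matrix to S in Frobenius norm among all matrices with prescribed means μ, variances σ², and Pearson correlation matrix equal to Corr(O). -/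
open Matrix

/- ## auxiliary lemmas -/

lemma gram_dot {n m : ℕ} (A : Matrix (Fin n) (Fin m) ℝ) (v : Fin m → ℝ) :
    (A *ᵥ v) ⬝ᵥ (A *ᵥ v) = v ⬝ᵥ (Aᵀ * A) *ᵥ v := by
  rw [← mulVec_mulVec, dotProduct_mulVec v Aᵀ, vecMul_transpose]

lemma exists_orthogonal_of_gram_eq {n m : ℕ} (X B : Matrix (Fin n) (Fin m) ℝ)
    (h : Xᵀ * X = Bᵀ * B) :
    ∃ Q : Matrix (Fin n) (Fin n) ℝ, Qᵀ * Q = 1 ∧ X = Q * B := by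
  have hnorm : ∀ v, (X *ᵥ v) ⬝ᵥ (X *ᵥ v) = (B *ᵥ v) ⬝ᵥ (B *ᵥ v) := by
    intro v; rw [gram_dot, gram_dot, h]
  let Xl : EuclideanSpace ℝ (Fin m) →ₗ[ℝ] EuclideanSpace ℝ (Fin n) := Matrix.toEuclideanLin X
  let Bl : EuclideanSpace ℝ (Fin m) →ₗ[ℝ] EuclideanSpace ℝ (Fin n) := Matrix.toEuclideanLin B
  have hXl : ∀ v, Xl v = X *ᵥ v := fun _ => rfl
  have hBl : ∀ v, Bl v = B *ᵥ v := fun _ => rfl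
  have hnrm : ∀ v, ‖Xl v‖ = ‖Bl v‖ := by
    intro v
    rw [EuclideanSpace.norm_eq, EuclideanSpace.norm_eq]
    congr 1
    have h1 : ∑ i, ‖(Xl v) i‖ ^ 2 = (X *ᵥ v) ⬝ᵥ (X *ᵥ v) := by
      rw [hXl]; simp [dotProduct, Real.norm_eq_abs, sq_abs, pow_two]
    have h2 : ∑ i, ‖(Bl v) i‖ ^ 2 = (B *ᵥ v) ⬝ᵥ (B *ᵥ v) := by
      rw [hBl]; simp [dotProduct, Real.norm_eq_abs, sq_abs, pow_two]
    rw [h1, h2, hnorm]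
  have hker : LinearMap.ker Bl ≤ LinearMap.ker Xl := by
    intro v hv
    rw [LinearMap.mem_ker] at hv ⊢
    have : ‖Xl v‖ = 0 := by rw [hnrm, hv, norm_zero]
    exact norm_eq_zero.mp this
  let e := LinearMap.quotKerEquivRange Bl
  let L0 : LinearMap.range Bl →ₗ[ℝ] EuclideanSpace ℝ (Fin n) :=
    (Submodule.liftQ (LinearMap.ker Bl) Xl hker).comp e.symm.toLinearMap
  have hL0 : ∀ v : EuclideanSpace ℝ (Fin m),
      L0 ⟨Bl v, LinearMap.mem_range_self _ v⟩ = Xl v := by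
    intro v
    have he : e (Submodule.Quotient.mk v) = ⟨Bl v, LinearMap.mem_range_self _ v⟩ :=
      Subtype.ext (LinearMap.quotKerEquivRange_apply_mk Bl v)
    have hsymm : e.symm ⟨Bl v, LinearMap.mem_range_self _ v⟩ = Submodule.Quotient.mk v := by
      rw [← he, LinearEquiv.symm_apply_apply]
    show (Submodule.liftQ (LinearMap.ker Bl) Xl hker) (e.symm ⟨Bl v, _⟩) = Xl v
    rw [hsymm, Submodule.liftQ_apply]
  let L : LinearMap.range Bl →ₗᵢ[ℝ] EuclideanSpace ℝ (Fin n) :=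
    { toLinearMap := L0
      norm_map' := by
        intro w
        obtain ⟨v, hv⟩ := w.prop
        have hw : w = ⟨Bl v, LinearMap.mem_range_self _ v⟩ := Subtype.ext hv.symm
        rw [hw]
        show ‖L0 ⟨Bl v, _⟩‖ = _
        rw [hL0 v, hnrm v]
        exact (Submodule.norm_coe (⟨Bl v, LinearMap.mem_range_self Bl v⟩ :
          LinearMap.range Bl)).symm }
  let Qe := L.extend
  have hQeB : ∀ v, Qe (Bl v) = Xl v := by
    intro v
    have hext : Qe (Bl v) = L ⟨Bl v, LinearMap.mem_range_self _ v⟩ :=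
      L.extend_apply ⟨Bl v, LinearMap.mem_range_self _ v⟩
    rw [hext]
    exact hL0 v
  obtain ⟨Q, hQv⟩ : ∃ Q : Matrix (Fin n) (Fin n) ℝ, ∀ v : EuclideanSpace ℝ (Fin n), Q *ᵥ v.ofLp = (Qe v).ofLp := by
    refine ⟨Matrix.toEuclideanLin.symm Qe.toLinearMap, fun v => ?_⟩
    show (Matrix.toEuclideanLin (Matrix.toEuclideanLin.symm Qe.toLinearMap) v).ofLp = _
    rw [LinearEquiv.apply_symm_apply]
    rfl
  refine ⟨Q, ?_, ?_⟩
  · ext j k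
    have hcol : ∀ (l : Fin n) i, Qe (EuclideanSpace.single l 1) i = Q i l := by
      intro l i
      rw [← hQv]
      simp [mulVec, dotProduct, EuclideanSpace.single_apply]
    have key : ∑ i, Q i j * Q i k = if j = k then 1 else 0 := by
      have h1 : ∑ i, Q i j * Q i k
          = (inner ℝ (Qe (EuclideanSpace.single j 1)) (Qe (EuclideanSpace.single k 1)) : ℝ) := by
        rw [PiLp.inner_apply]
        refine Finset.sum_congr rfl (fun i _ => ?_)
        rw [hcol j i, hcol k i]
        simp [mul_comm]
      rw [h1, Qe.inner_map_map]
      rw [PiLp.inner_apply]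
      rcases eq_or_ne j k with rfl | hjk
      · simp [EuclideanSpace.single_apply]
      · simp [EuclideanSpace.single_apply, hjk, Ne.symm hjk]
    rw [mul_apply, Matrix.one_apply]
    simpa using key
  · ext i j
    have hBcol : Bl (EuclideanSpace.single j 1) = fun i => B i j := by
      funext i
      rw [hBl]
      simp [mulVec, dotProduct, EuclideanSpace.single_apply]
    have h2 : (Q * B) i j = (Q *ᵥ (fun k => B k j)) i := by
      simp [mul_apply, mulVec, dotProduct]
    rw [h2]
    have h3 : (fun k => B k j) = Bl (EuclideanSpace.single j 1) := hBcol.symm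
    rw [h3, hQv, hQeB, hXl]
    simp [mulVec, dotProduct, EuclideanSpace.single_apply]

lemma sum_centv {n : ℕ} (f : Fin n → ℝ) : ∑ i, centv f i = 0 := by
  rcases Nat.eq_zero_or_pos n with h | h
  · subst h; simp
  · have hn : (n : ℝ) ≠ 0 := Nat.cast_ne_zero.mpr h.ne'
    simp only [centv, meanv, Finset.sum_sub_distrib, Finset.sum_const, Finset.card_univ,
      Fintype.card_fin, nsmul_eq_mul]
    field_simp
    ring

lemma fip_cross {n m : ℕ} (D : Matrix (Fin n) (Fin m) ℝ) (g : Fin m → ℝ)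
    (hD : ∀ j, ∑ i, D i j = 0) :
    ∑ i, ∑ j, (D i j + g j) ^ 2
      = (∑ i : Fin n, ∑ j : Fin m, (D i j) ^ 2) + ∑ _i : Fin n, ∑ j : Fin m, (g j) ^ 2 := by
  have hexp : ∀ (i : Fin n) (j : Fin m),
      (D i j + g j) ^ 2 = ((D i j) ^ 2 + (g j) ^ 2) + 2 * (D i j * g j) := by
    intros; ring
  simp_rw [hexp, Finset.sum_add_distrib]
  have hc : ∑ i : Fin n, ∑ j : Fin m, 2 * (D i j * g j) = 0 := by
    rw [Finset.sum_comm]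
    have h5 : ∀ j, ∑ i : Fin n, 2 * (D i j * g j) = 0 := by
      intro j
      have h6 : ∑ i : Fin n, 2 * (D i j * g j) = 2 * ((∑ i, D i j) * g j) := by
        rw [Finset.sum_mul, Finset.mul_sum]
      rw [h6, hD j]; ring
    simp [h5]
  rw [hc, add_zero]

lemma trace_fip {n m : ℕ} (A A' : Matrix (Fin n) (Fin m) ℝ) :
    ∑ i, ∑ j, A i j * A' i j = Matrix.trace (Aᵀ * A') := by
  rw [Matrix.trace]
  simp only [Matrix.diag, mul_apply, transpose_apply]
  exact Finset.sum_comm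

set_option maxHeartbeats 1000000 in
/-- The matrix `Ŝ = U I_Σ Vᵀ Ō N + T` built from an SVD
`S̄(ŌN)ᵀ = U Σ Vᵀ` (under the rank condition `rank(S̄(ŌN)ᵀ) = rank(ŌN)`) is a closest
matrix to `S` in Frobenius norm among all matrices with prescribed means `μ`, variances
`σ²`, and Pearson correlation matrix equal to `Corr(O)`. -/
theorem procrustes_synthetic_data_optimality {n m : ℕ}
    (O S : Matrix (Fin n) (Fin m) ℝ) (hO : ∀ j, _root_.col (centM O) j ≠ 0)
    (μ σ : Fin m → ℝ) (hσ : ∀ j, 0 < σ j)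
    (N : Matrix (Fin m) (Fin m) ℝ)
    (hN : N = Matrix.diagonal (fun j => σ j * Real.sqrt n / enormv (_root_.col (centM O) j)))
    (T : Matrix (Fin n) (Fin m) ℝ) (hT : T = fun _ j => μ j)
    (U V : Matrix (Fin n) (Fin n) ℝ) (hU : Uᵀ * U = 1) (hV : Vᵀ * V = 1)
    (s : Fin n → ℝ) (hs : ∀ i, 0 ≤ s i)
    (hSVD : centM S * (centM O * N)ᵀ = U * Matrix.diagonal s * Vᵀ)
    (hrank : (centM S * (centM O * N)ᵀ).rank = (centM O * N).rank)
    (Shat : Matrix (Fin n) (Fin m) ℝ)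
    (hShat : Shat = U * Isig s * Vᵀ * (centM O * N) + T) :
    ∀ Shat' : Matrix (Fin n) (Fin m) ℝ,
      (∀ j, meanv (_root_.col Shat' j) = μ j) → (∀ j, varv (_root_.col Shat' j) = (σ j) ^ 2) →
      corrM Shat' = corrM O →
      frob (Shat - S) ≤ frob (Shat' - S) := by
  intro Shat' hmean hvar hcorr
  rcases Nat.eq_zero_or_pos n with hn | hn
  · subst hn
    simp [frob]
  have hnR : (0 : ℝ) < n := Nat.cast_pos.mpr hn
  set B : Matrix (Fin n) (Fin m) ℝ := centM O * N with hB
  set C : Matrix (Fin n) (Fin m) ℝ := centM S with hC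
  set X : Matrix (Fin n) (Fin m) ℝ := centM Shat' with hX
  set D : Matrix (Fin n) (Fin n) ℝ := Matrix.diagonal s with hD
  -- basic centering facts
  have hXsum : ∀ j, ∑ i, X i j = 0 := fun j => sum_centv (fun i => Shat' i j)
  have hCsum : ∀ j, ∑ i, C i j = 0 := fun j => sum_centv (fun i => S i j)
  have hXentry : ∀ i j, X i j = Shat' i j - μ j := by
    intro i j
    show Shat' i j - meanv (_root_.col Shat' j) = _
    rw [hmean j]
  -- norms of centered columns of O
  have hOn : ∀ j, 0 < enormv (_root_.col (centM O) j) := by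
    intro j
    have hne := hO j
    rw [Function.ne_iff] at hne
    obtain ⟨i, hi⟩ := hne
    have : 0 < dotv (_root_.col (centM O) j) (_root_.col (centM O) j) := by
      apply Finset.sum_pos' (fun i _ => mul_self_nonneg _)
      exact ⟨i, Finset.mem_univ i, mul_self_pos.mpr hi⟩
    exact Real.sqrt_pos.mpr this
  -- Gram matrix equality
  have hss : Real.sqrt n * Real.sqrt n = (n : ℝ) := Real.mul_self_sqrt (Nat.cast_nonneg n)
  have hsn : (0 : ℝ) < Real.sqrt n := Real.sqrt_pos.mpr hnR
  have hXnorm : ∀ j, dotv (_root_.col X j) (_root_.col X j) = (σ j * Real.sqrt n) * (σ j * Real.sqrt n) := by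
    intro j
    have hv := hvar j
    rw [varv, div_eq_iff (ne_of_gt hnR)] at hv
    have h1 : dotv (_root_.col X j) (_root_.col X j) = ∑ i, (centv (_root_.col Shat' j) i) ^ 2 := by
      unfold dotv _root_.col
      refine Finset.sum_congr rfl (fun i _ => ?_)
      have hxc : X i j = centv (_root_.col Shat' j) i := rfl
      rw [hxc, pow_two]
      rfl
    rw [h1, hv]
    nlinarith [hss]
  have henorm : ∀ j, enormv (_root_.col X j) = σ j * Real.sqrt n := by
    intro j
    rw [enormv, hXnorm j, Real.sqrt_mul_self (mul_nonneg (hσ j).le hsn.le)]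
  have hGram : Xᵀ * X = Bᵀ * B := by
    ext j k
    have hc : dotv (_root_.col X j) (_root_.col X k) / (enormv (_root_.col X j) * enormv (_root_.col X k))
        = dotv (_root_.col (centM O) j) (_root_.col (centM O) k)
          / (enormv (_root_.col (centM O) j) * enormv (_root_.col (centM O) k)) := by
      have := congrFun (congrFun hcorr j) k
      simpa [corrM, cosSim] using this
    have hXd : dotv (_root_.col X j) (_root_.col X k)
        = ((σ j * Real.sqrt n) * (σ k * Real.sqrt n))
          * (dotv (_root_.col (centM O) j) (_root_.col (centM O) k)
            / (enormv (_root_.col (centM O) j) * enormv (_root_.col (centM O) k))) := by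
      have hpos : (0:ℝ) < enormv (_root_.col X j) * enormv (_root_.col X k) := by
        rw [henorm j, henorm k]
        exact mul_pos (mul_pos (hσ j) hsn) (mul_pos (hσ k) hsn)
      have h5 := hc
      rw [div_eq_iff (ne_of_gt hpos)] at h5
      rw [h5, henorm j, henorm k]
      ring
    have hLHS : (Xᵀ * X) j k = dotv (_root_.col X j) (_root_.col X k) := by
      rw [mul_apply]
      unfold dotv _root_.col
      simp [transpose_apply]
    have hBentry : ∀ (i : Fin n) (j : Fin m),
        B i j = centM O i j * (σ j * Real.sqrt n / enormv (_root_.col (centM O) j)) := by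
      intro i j
      rw [hB, hN, Matrix.mul_diagonal]
    have hRHS : (Bᵀ * B) j k
        = (σ j * Real.sqrt n / enormv (_root_.col (centM O) j))
          * (σ k * Real.sqrt n / enormv (_root_.col (centM O) k))
          * dotv (_root_.col (centM O) j) (_root_.col (centM O) k) := by
      have hterm : ∀ i, Bᵀ j i * B i k
          = (σ j * Real.sqrt n / enormv (_root_.col (centM O) j))
            * (σ k * Real.sqrt n / enormv (_root_.col (centM O) k))
            * (_root_.col (centM O) j i * _root_.col (centM O) k i) := by
        intro i
        rw [transpose_apply, hBentry, hBentry]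
        unfold _root_.col
        ring
      rw [mul_apply]
      simp_rw [hterm]
      rw [← Finset.mul_sum]
      rfl
    rw [hLHS, hRHS, hXd]
    have h1 : enormv (_root_.col (centM O) j) ≠ 0 := ne_of_gt (hOn j)
    have h2 : enormv (_root_.col (centM O) k) ≠ 0 := ne_of_gt (hOn k)
    field_simp
  obtain ⟨Q, hQ1, hQ2⟩ := exists_orthogonal_of_gram_eq X B hGram
  -- transposed SVD
  have hBCt : B * Cᵀ = V * D * Uᵀ := by
    have h0 := congrArg Matrix.transpose hSVD
    rw [Matrix.transpose_mul, Matrix.transpose_transpose] at h0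
    rw [h0, Matrix.transpose_mul, Matrix.transpose_mul, Matrix.transpose_transpose,
      Matrix.diagonal_transpose, Matrix.mul_assoc]
  -- helper cancellation facts
  have hUUt : U * Uᵀ = 1 := mul_eq_one_comm.mp hU
  have hQQt : Q * Qᵀ = 1 := mul_eq_one_comm.mp hQ1
  have hVV : ∀ {κ : Type} [Fintype κ] (M : Matrix (Fin n) κ ℝ), Vᵀ * (V * M) = M := by
    intro κ _ M; rw [← Matrix.mul_assoc, hV, Matrix.one_mul]
  have hUUc : ∀ {κ : Type} [Fintype κ] (M : Matrix (Fin n) κ ℝ), Uᵀ * (U * M) = M := by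
    intro κ _ M; rw [← Matrix.mul_assoc, hU, Matrix.one_mul]
  have hIt : (Isig s)ᵀ = Isig s := by
    unfold Isig
    rw [Matrix.diagonal_transpose]
  have hIsigD : Isig s * D = D := by
    rw [hD]
    ext i j
    unfold Isig
    rw [Matrix.diagonal_mul_diagonal]
    rcases eq_or_ne i j with rfl | hij
    · rw [Matrix.diagonal_apply_eq, Matrix.diagonal_apply_eq]
      show (if 0 < s i then (1:ℝ) else 0) * s i = s i
      rcases (hs i).lt_or_eq with hpos | hzero
      · simp [hpos]
      · simp [← hzero]
    · rw [Matrix.diagonal_apply_ne _ hij, Matrix.diagonal_apply_ne _ hij]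
  have hII : Isig s * Isig s = Isig s := by
    ext i j
    unfold Isig
    rw [Matrix.diagonal_mul_diagonal]
    rcases eq_or_ne i j with rfl | hij
    · rw [Matrix.diagonal_apply_eq, Matrix.diagonal_apply_eq]
      show (if 0 < s i then (1:ℝ) else 0) * (if 0 < s i then (1:ℝ) else 0) = _
      split <;> simp
    · rw [Matrix.diagonal_apply_ne _ hij, Matrix.diagonal_apply_ne _ hij]
  -- the projection V * Isig s * Vᵀ fixes B
  have hPBC : (V * Isig s * Vᵀ) * (B * Cᵀ) = B * Cᵀ := by
    rw [hBCt]
    calc (V * Isig s * Vᵀ) * (V * D * Uᵀ)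
        = V * (Isig s * (Vᵀ * (V * (D * Uᵀ)))) := by
          simp only [Matrix.mul_assoc]
      _ = V * (Isig s * (D * Uᵀ)) := by rw [hVV]
      _ = V * ((Isig s * D) * Uᵀ) := by rw [Matrix.mul_assoc]
      _ = V * D * Uᵀ := by rw [hIsigD, Matrix.mul_assoc]
  have hrange : LinearMap.range (B * Cᵀ).mulVecLin = LinearMap.range B.mulVecLin := by
    have hle : LinearMap.range (B * Cᵀ).mulVecLin ≤ LinearMap.range B.mulVecLin := by
      rw [Matrix.mulVecLin_mul]
      exact LinearMap.range_comp_le_range _ _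
    apply Submodule.eq_of_le_of_finrank_le hle
    have h1 : (B * Cᵀ).rank = B.rank := by
      rw [← Matrix.rank_transpose (B * Cᵀ), Matrix.transpose_mul, Matrix.transpose_transpose]
      exact hrank
    exact le_of_eq h1.symm
  have hPB : (V * Isig s * Vᵀ) * B = B := by
    ext i j
    have hmem : (fun i => B i j) ∈ LinearMap.range (B * Cᵀ).mulVecLin := by
      rw [hrange]
      refine ⟨Pi.single j 1, ?_⟩
      show B *ᵥ Pi.single j 1 = _
      simp [Matrix.mulVec_single]
      rfl
    obtain ⟨v, hv⟩ := hmem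
    have hv' : (B * Cᵀ) *ᵥ v = fun i => B i j := hv
    have hfix : (V * Isig s * Vᵀ) *ᵥ (fun i => B i j) = fun i => B i j := by
      rw [← hv', mulVec_mulVec, hPBC]
    have h2 : ((V * Isig s * Vᵀ) * B) i j = ((V * Isig s * Vᵀ) *ᵥ (fun k => B k j)) i := by
      simp [mul_apply, mulVec, dotProduct]
    rw [h2, hfix]
  -- the candidate centered matrix
  set A₀ : Matrix (Fin n) (Fin m) ℝ := U * Isig s * Vᵀ * B with hA₀
  -- column sums of A₀ vanish
  have hA0sum : ∀ j, ∑ i, A₀ i j = 0 := by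
    have ones_C : (fun _ : Fin n => (1:ℝ)) ᵥ* C = 0 := by
      funext j
      show ∑ i, (1:ℝ) * C i j = 0
      simp only [one_mul]
      exact hCsum j
    have ones_UD : (fun _ : Fin n => (1:ℝ)) ᵥ* (U * D) = 0 := by
      have h1 : (fun _ : Fin n => (1:ℝ)) ᵥ* (C * Bᵀ) = 0 := by
        rw [← Matrix.vecMul_vecMul, ones_C, Matrix.zero_vecMul]
      rw [hSVD] at h1
      have h2 : (fun _ : Fin n => (1:ℝ)) ᵥ* (U * D * Vᵀ * V) = 0 := by
        rw [← Matrix.vecMul_vecMul, h1, Matrix.zero_vecMul]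
      rwa [Matrix.mul_assoc (U * D) Vᵀ V, hV, Matrix.mul_one] at h2
    have ones_UI : (fun _ : Fin n => (1:ℝ)) ᵥ* (U * Isig s) = 0 := by
      rw [← Matrix.vecMul_vecMul]
      rw [← Matrix.vecMul_vecMul] at ones_UD
      funext i
      have h2 : ((fun _ : Fin n => (1:ℝ)) ᵥ* U) i * s i = 0 := by
        have h3 := congrFun ones_UD i
        rw [hD, Matrix.vecMul_diagonal] at h3
        simpa using h3
      show (((fun _ : Fin n => (1:ℝ)) ᵥ* U) ᵥ* Isig s) i = 0
      unfold Isig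
      rw [Matrix.vecMul_diagonal]
      rcases mul_eq_zero.mp h2 with h3 | h3
      · rw [h3, zero_mul]
      · rw [h3]
        simp
    intro j
    have h4 : (fun _ : Fin n => (1:ℝ)) ᵥ* A₀ = 0 := by
      have hassoc : A₀ = (U * Isig s) * (Vᵀ * B) := by
        rw [hA₀]; simp only [Matrix.mul_assoc]
      rw [hassoc, ← Matrix.vecMul_vecMul, ones_UI, Matrix.zero_vecMul]
    have h5 := congrFun h4 j
    simpa [vecMul, dotProduct] using h5
  -- Gram of A₀
  have hA0gram : A₀ᵀ * A₀ = Bᵀ * B := by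
    have e1 : A₀ᵀ * A₀ = Bᵀ * (V * (Isig s * (Uᵀ * (U * (Isig s * (Vᵀ * B)))))) := by
      rw [hA₀]
      simp only [Matrix.transpose_mul, hIt, Matrix.transpose_transpose, Matrix.mul_assoc]
    have hPB' : V * (Isig s * (Vᵀ * B)) = B := by
      have h := hPB
      simp only [Matrix.mul_assoc] at h
      exact h
    rw [e1, hUUc, ← Matrix.mul_assoc (Isig s) (Isig s) (Vᵀ * B), hII, hPB']
  -- trace of A₀ᵀ C equals sum of singular values
  have htrA0C : Matrix.trace (A₀ᵀ * C) = ∑ i, s i := by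
    have e1 : A₀ᵀ * C = Bᵀ * ((V * Isig s * Uᵀ) * C) := by
      rw [hA₀]
      simp only [Matrix.transpose_mul, hIt, Matrix.transpose_transpose, Matrix.mul_assoc]
    rw [e1, Matrix.trace_mul_comm, Matrix.mul_assoc, hSVD]
    have e3 : (V * Isig s * Uᵀ) * (U * D * Vᵀ) = V * (Isig s * (Uᵀ * (U * (D * Vᵀ)))) := by
      simp only [Matrix.mul_assoc]
    rw [e3, hUUc, ← Matrix.mul_assoc (Isig s) D Vᵀ, hIsigD]
    rw [Matrix.trace_mul_comm, Matrix.mul_assoc, hV, Matrix.mul_one, hD,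
      Matrix.trace_diagonal]
  -- trace of Xᵀ C is bounded by the sum of singular values
  have htrXC : Matrix.trace (Xᵀ * C) ≤ ∑ i, s i := by
    set W : Matrix (Fin n) (Fin n) ℝ := Vᵀ * Qᵀ * U with hW
    have hWWt : W * Wᵀ = 1 := by
      rw [hW]
      simp only [Matrix.transpose_mul, Matrix.transpose_transpose, Matrix.mul_assoc]
      rw [← Matrix.mul_assoc U Uᵀ, hUUt, Matrix.one_mul,
        ← Matrix.mul_assoc Qᵀ Q, hQ1, Matrix.one_mul, hV]
    have e2 : Matrix.trace (Xᵀ * C) = Matrix.trace (W * D) := by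
      have e1 : Xᵀ * C = Bᵀ * (Qᵀ * C) := by
        rw [hQ2]
        simp only [Matrix.transpose_mul, Matrix.mul_assoc]
      rw [e1, Matrix.trace_mul_comm, Matrix.mul_assoc, hSVD,
        ← Matrix.mul_assoc Qᵀ (U * D) Vᵀ, Matrix.trace_mul_comm, hW]
      simp only [Matrix.mul_assoc]
    have hWii : ∀ i, W i i ≤ 1 := by
      intro i
      have h1 : (W * Wᵀ) i i = 1 := by rw [hWWt]; simp [Matrix.one_apply]
      have h2 : ∑ k, W i k * W i k = 1 := by
        rw [← h1, mul_apply]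
        simp [transpose_apply]
      have h3 : W i i * W i i ≤ 1 := by
        rw [← h2]
        exact Finset.single_le_sum (f := fun k => W i k * W i k)
          (fun k _ => mul_self_nonneg _) (Finset.mem_univ i)
      nlinarith
    rw [e2, Matrix.trace]
    have hdiag : ∀ i, Matrix.diag (W * D) i = W i i * s i := by
      intro i
      show (W * D) i i = _
      rw [hD, Matrix.mul_diagonal]
    calc ∑ i, Matrix.diag (W * D) i = ∑ i, W i i * s i :=
          Finset.sum_congr rfl (fun i _ => hdiag i)
      _ ≤ ∑ i, s i := by
          refine Finset.sum_le_sum (fun i _ => ?_)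
          have := mul_le_mul_of_nonneg_right (hWii i) (hs i)
          simpa using this
  -- final assembly
  have expand : ∀ Y : Matrix (Fin n) (Fin m) ℝ,
      ∑ i : Fin n, ∑ j : Fin m, (Y i j - C i j) ^ 2
      = Matrix.trace (Yᵀ * Y) - 2 * Matrix.trace (Yᵀ * C) + Matrix.trace (Cᵀ * C) := by
    intro Y
    have h1 : ∀ (i : Fin n) (j : Fin m),
        (Y i j - C i j) ^ 2 = Y i j * Y i j - 2 * (Y i j * C i j) + C i j * C i j := by
      intros; ring
    simp_rw [h1, Finset.sum_add_distrib, Finset.sum_sub_distrib, ← Finset.mul_sum]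
    rw [trace_fip Y Y, trace_fip Y C, trace_fip C C]
  have key : ∑ i : Fin n, ∑ j : Fin m, (Shat i j - S i j) ^ 2
      ≤ ∑ i : Fin n, ∑ j : Fin m, (Shat' i j - S i j) ^ 2 := by
    have hg : ∀ (i : Fin n) (j : Fin m),
        Shat i j - S i j = (A₀ i j - C i j) + (μ j - meanv (_root_.col S j)) := by
      intro i j
      have hSh : Shat i j = A₀ i j + μ j := by
        rw [hShat, hT]
        rfl
      have hCij : C i j = S i j - meanv (_root_.col S j) := rfl
      rw [hSh, hCij]; ring
    have hg' : ∀ (i : Fin n) (j : Fin m),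
        Shat' i j - S i j = (X i j - C i j) + (μ j - meanv (_root_.col S j)) := by
      intro i j
      have hCij : C i j = S i j - meanv (_root_.col S j) := rfl
      rw [hXentry i j, hCij]; ring
    have hL : ∑ i : Fin n, ∑ j : Fin m, (Shat i j - S i j) ^ 2
        = (∑ i : Fin n, ∑ j : Fin m, (A₀ i j - C i j) ^ 2)
          + ∑ _i : Fin n, ∑ j : Fin m, (μ j - meanv (_root_.col S j)) ^ 2 := by
      have e := fip_cross (fun i j => A₀ i j - C i j) (fun j => μ j - meanv (_root_.col S j))
        (fun j => by simp [Finset.sum_sub_distrib, hA0sum j, hCsum j])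
      simp_rw [hg]
      exact e
    have hR : ∑ i : Fin n, ∑ j : Fin m, (Shat' i j - S i j) ^ 2
        = (∑ i : Fin n, ∑ j : Fin m, (X i j - C i j) ^ 2)
          + ∑ _i : Fin n, ∑ j : Fin m, (μ j - meanv (_root_.col S j)) ^ 2 := by
      have e := fip_cross (fun i j => X i j - C i j) (fun j => μ j - meanv (_root_.col S j))
        (fun j => by simp [Finset.sum_sub_distrib, hXsum j, hCsum j])
      simp_rw [hg']
      exact e
    rw [hL, hR]
    have h2 : ∑ i : Fin n, ∑ j : Fin m, (A₀ i j - C i j) ^ 2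
        ≤ ∑ i : Fin n, ∑ j : Fin m, (X i j - C i j) ^ 2 := by
      rw [expand A₀, expand X, hA0gram, hGram, htrA0C]
      linarith [htrXC]
    linarith [h2]
  unfold frob
  apply Real.sqrt_le_sqrt
  simpa [Matrix.sub_apply] using key
end
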